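/- Let G be a symmetric positive semidefinite matrix, γ ≥ 0, and suppose x_{k+1} minimizes x ↦ Φ(x) + (1/2)‖x − x^{md}_k‖²_G over ℝ^m, where x^{md}_k = x_k + γ(x_k − x_{k−1}). Then Φ(x_k) − Φ(x_{k+1}) ≥ (γ/2)(‖x_{k+1} − x_k‖²_G − ‖x_k − x_{k−1}‖²_G) + ((1−2γ)/2)‖x_{k+1} − x_k‖²_G. -/

import Mathlib

open Matrix

theorem stmt_5 {m : ℕ} (Φ : (Fin m → ℝ) → EReal)
    (G : Matrix (Fin m) (Fin m) ℝ) (hG : G.PosSemidef)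
    (γ : ℝ) (hγ0 : 0 ≤ γ) (hγ1 : γ < 1 / 2)
    (xkm xk x1 xmd : Fin m → ℝ)
    (hmd : xmd = xk + γ • (xk - xkm))
    (hmin : ∀ x : Fin m → ℝ,
      Φ x1 + ((1 / 2) * ((x1 - xmd) ⬝ᵥ G.mulVec (x1 - xmd)) : ℝ) ≤
        Φ x + ((1 / 2) * ((x - xmd) ⬝ᵥ G.mulVec (x - xmd)) : ℝ)) :
    (((γ / 2) * ((x1 - xk) ⬝ᵥ G.mulVec (x1 - xk) - (xk - xkm) ⬝ᵥ G.mulVec (xk - xkm))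
        + ((1 - 2 * γ) / 2) * ((x1 - xk) ⬝ᵥ G.mulVec (x1 - xk)) : ℝ) : EReal)
      + Φ x1 ≤ Φ xk := by
  have hsym : ∀ u v : Fin m → ℝ, u ⬝ᵥ G.mulVec v = v ⬝ᵥ G.mulVec u := by
    intro u v
    have h : Gᵀ = G := hG.isHermitian
    rw [dotProduct_mulVec, ← mulVec_transpose, h, dotProduct_comm]
  set a := x1 - xk with ha
  set b := xk - xkm with hb
  -- scalar abbreviations
  set Qa : ℝ := a ⬝ᵥ G.mulVec a with hQa
  set Qb : ℝ := b ⬝ᵥ G.mulVec b with hQb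
  set Qab : ℝ := a ⬝ᵥ G.mulVec b with hQab
  have key : 2 * Qab ≤ Qa + Qb := by
    have h := hG.dotProduct_mulVec_nonneg (a - b)
    simp only [star_trivial] at h
    have hexp : (a - b) ⬝ᵥ G.mulVec (a - b) = Qa - 2 * Qab + Qb := by
      rw [hQa, hQb, hQab, mulVec_sub, sub_dotProduct, dotProduct_sub, dotProduct_sub,
        hsym b a]
      ring
    rw [hexp] at h
    linarith
  have h1 : x1 - xmd = a - γ • b := by
    rw [hmd, ha, hb]; abel
  have h2 : xk - xmd = -(γ • b) := by
    rw [hmd, hb]; abel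
  have c1 : (1 / 2) * ((x1 - xmd) ⬝ᵥ G.mulVec (x1 - xmd))
      = (1 / 2) * (Qa - 2 * γ * Qab + γ ^ 2 * Qb) := by
    rw [h1, hQa, hQb, hQab]
    simp only [mulVec_sub, sub_dotProduct, dotProduct_sub, mulVec_smul, smul_dotProduct,
      dotProduct_smul, smul_eq_mul, hsym b a]
    ring
  have c2 : (1 / 2) * ((xk - xmd) ⬝ᵥ G.mulVec (xk - xmd))
      = (1 / 2) * (γ ^ 2 * Qb) := by
    rw [h2, hQb]
    simp only [mulVec_neg, neg_dotProduct, dotProduct_neg, neg_neg, mulVec_smul,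
      smul_dotProduct, dotProduct_smul, smul_eq_mul]
    ring
  set r : ℝ := (γ / 2) * (Qa - Qb) + ((1 - 2 * γ) / 2) * Qa with hr
  set C1 : ℝ := (1 / 2) * ((x1 - xmd) ⬝ᵥ G.mulVec (x1 - xmd)) with hC1
  set C2 : ℝ := (1 / 2) * ((xk - xmd) ⬝ᵥ G.mulVec (xk - xmd)) with hC2
  have hrle : r ≤ C1 - C2 := by
    rw [hr, c1, c2]
    nlinarith [mul_le_mul_of_nonneg_left key hγ0]
  have hm := hmin xk
  -- from hm : Φ x1 + C1 ≤ Φ xk + C2, deduce Φ x1 + (C1 - C2) ≤ Φ xk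
  have hstep : Φ x1 + ((C1 - C2 : ℝ) : EReal) ≤ Φ xk := by
    have h3 : Φ x1 + ((C1 - C2 : ℝ) : EReal) + ((C2 : ℝ) : EReal)
        = Φ x1 + ((C1 : ℝ) : EReal) := by
      rw [add_assoc, ← EReal.coe_add]
      norm_num
    have h4 : Φ x1 + ((C1 - C2 : ℝ) : EReal) + ((C2 : ℝ) : EReal) ≤ Φ xk + ((C2 : ℝ) : EReal) := by
      rw [h3]; exact hm
    calc Φ x1 + ((C1 - C2 : ℝ) : EReal)
        = Φ x1 + ((C1 - C2 : ℝ) : EReal) + ((C2 : ℝ) : EReal) + ((-C2 : ℝ) : EReal) := by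
          rw [add_assoc, add_assoc, ← EReal.coe_add, ← EReal.coe_add]
          norm_num
      _ ≤ Φ xk + ((C2 : ℝ) : EReal) + ((-C2 : ℝ) : EReal) :=
          add_le_add_left h4 _
      _ = Φ xk := by
          rw [add_assoc, ← EReal.coe_add]
          norm_num
  calc ((r : ℝ) : EReal) + Φ x1 = Φ x1 + ((r : ℝ) : EReal) := add_comm _ _
    _ ≤ Φ x1 + ((C1 - C2 : ℝ) : EReal) := by
        exact add_le_add_right (EReal.coe_le_coe_iff.mpr hrle) _
    _ ≤ Φ xk := hstep
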